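/- arXiv:2001.07327 — 3 statements merged into one kernel-verified Lean document; each statement's English description precedes it below -/
import Mathlib

section
/- Let A, C : H ⇉ H be maximally monotone, B : H → H monotone, and λ > 0. Suppose x, z ∈ H satisfy z - x ∈ λA(x) and x - z ∈ λ(B+C)(x), and the points x_k, y_k, z_k, z_{k+1}, y_{k-1}, y_{k-2} ∈ H satisfy z_k - x_k ∈ λA(x_k), 2x_k - z_k - y_k - 2λB(y_{k-1}) + λB(y_{k-2}) ∈ λC(y_k), and z_{k+1} = z_k + y_k - x_k. Then ‖z_{k+1} - z‖² + 2λ⟨B(y_k) - B(y_{k-1}), x - y_k⟩ + ‖z_{k+1} - z_k‖² ≤ ‖z_k - z‖² + 2λ⟨B(y_{k-1}) - B(y_{k-2}), x - y_{k-1}⟩ + 2λ⟨B(y_{k-1}) - B(y_{k-2}), y_{k-1} - y_k⟩. -/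
open scoped RealInnerProductSpace

/-- A set-valued operator `A : H ⇉ H` is monotone. -/
def MonotoneOp {H : Type*} [NormedAddCommGroup H] [InnerProductSpace ℝ H]
    (A : H → Set H) : Prop :=
  ∀ ⦃x y u v : H⦄, u ∈ A x → v ∈ A y → 0 ≤ ⟪u - v, x - y⟫

/-- A set-valued operator `A : H ⇉ H` is maximally monotone. -/
def MaxMonotoneOp {H : Type*} [NormedAddCommGroup H] [InnerProductSpace ℝ H]
    (A : H → Set H) : Prop :=
  MonotoneOp A ∧
    ∀ x u : H, (∀ y v : H, v ∈ A y → 0 ≤ ⟪u - v, x - y⟫) → u ∈ A x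

/-- Key one-step estimate (Lemma 3.1) for the backward-forward-reflected-backward
method. -/
theorem bforb_key_lemma
    {H : Type*} [NormedAddCommGroup H] [InnerProductSpace ℝ H] [CompleteSpace H]
    (A C : H → Set H) (hA : MaxMonotoneOp A) (hC : MaxMonotoneOp C)
    (B : H → H) (hB : ∀ u v : H, 0 ≤ ⟪B u - B v, u - v⟫)
    (lam : ℝ) (hlam : 0 < lam)
    (x z xk yk zk zkp1 yk1 yk2 : H)
    -- z - x ∈ λA(x)
    (hzx : ∃ a ∈ A x, z - x = lam • a)
    -- x - z ∈ λ(B+C)(x), i.e. x - z - λB(x) ∈ λC(x)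
    (hxz : ∃ c ∈ C x, x - z = lam • (B x + c))
    -- z_k - x_k ∈ λA(x_k)
    (hAk : ∃ a ∈ A xk, zk - xk = lam • a)
    -- 2x_k - z_k - y_k - 2λB(y_{k-1}) + λB(y_{k-2}) ∈ λC(y_k)
    (hCk : ∃ c ∈ C yk,
        (2 : ℝ) • xk - zk - yk - (2 * lam) • B yk1 + lam • B yk2 = lam • c)
    (hz : zkp1 = zk + yk - xk) :
    ‖zkp1 - z‖ ^ 2 + 2 * lam * ⟪B yk - B yk1, x - yk⟫ + ‖zkp1 - zk‖ ^ 2 ≤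
      ‖zk - z‖ ^ 2 + 2 * lam * ⟪B yk1 - B yk2, x - yk1⟫ +
        2 * lam * ⟪B yk1 - B yk2, yk1 - yk⟫ := by
  obtain ⟨a0, ha0, hza⟩ := hzx
  obtain ⟨c0, hc0, hxc⟩ := hxz
  obtain ⟨ak, hak, hzk⟩ := hAk
  obtain ⟨ck, hck, hyk⟩ := hCk
  have h1 : (0:ℝ) ≤ ⟪(z - x) - (zk - xk), x - xk⟫ := by
    have hm := hA.1 ha0 hak
    rw [hza, hzk, ← smul_sub, real_inner_smul_left]
    exact mul_nonneg hlam.le hm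
  have h2 : (0:ℝ) ≤ ⟪(x - z - lam • B x) -
      ((2 : ℝ) • xk - zk - yk - (2 * lam) • B yk1 + lam • B yk2), x - yk⟫ := by
    have hm := hC.1 hc0 hck
    have e0 : x - z - lam • B x = lam • c0 := by rw [hxc, smul_add]; abel
    rw [e0, hyk, ← smul_sub, real_inner_smul_left]
    exact mul_nonneg hlam.le hm
  have h3 : (0:ℝ) ≤ lam * ⟪B x - B yk, x - yk⟫ := mul_nonneg hlam.le (hB x yk)
  subst hz
  simp only [← real_inner_self_eq_norm_sq]
  simp only [inner_sub_left, inner_sub_right, inner_add_left, inner_add_right,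
    real_inner_smul_left, real_inner_smul_right] at h1 h2 h3 ⊢
  simp only [real_inner_comm z x,
      real_inner_comm xk x,
      real_inner_comm yk x,
      real_inner_comm zk x,
      real_inner_comm yk1 x,
      real_inner_comm (B x) x,
      real_inner_comm (B yk) x,
      real_inner_comm (B yk1) x,
      real_inner_comm (B yk2) x,
      real_inner_comm xk z,
      real_inner_comm yk z,
      real_inner_comm zk z,
      real_inner_comm yk1 z,
      real_inner_comm (B x) z,
      real_inner_comm (B yk) z,
      real_inner_comm (B yk1) z,
      real_inner_comm (B yk2) z,
      real_inner_comm yk xk,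
      real_inner_comm zk xk,
      real_inner_comm yk1 xk,
      real_inner_comm (B x) xk,
      real_inner_comm (B yk) xk,
      real_inner_comm (B yk1) xk,
      real_inner_comm (B yk2) xk,
      real_inner_comm zk yk,
      real_inner_comm yk1 yk,
      real_inner_comm (B x) yk,
      real_inner_comm (B yk) yk,
      real_inner_comm (B yk1) yk,
      real_inner_comm (B yk2) yk,
      real_inner_comm yk1 zk,
      real_inner_comm (B x) zk,
      real_inner_comm (B yk) zk,
      real_inner_comm (B yk1) zk,
      real_inner_comm (B yk2) zk,
      real_inner_comm (B x) yk1,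
      real_inner_comm (B yk) yk1,
      real_inner_comm (B yk1) yk1,
      real_inner_comm (B yk2) yk1,
      real_inner_comm (B yk) (B x),
      real_inner_comm (B yk1) (B x),
      real_inner_comm (B yk2) (B x),
      real_inner_comm (B yk1) (B yk),
      real_inner_comm (B yk2) (B yk),
      real_inner_comm (B yk2) (B yk1)] at h1 h2 h3 ⊢
  linarith [h1, h2, h3]
end

section
/- (Opial's lemma) Let (z_k) be a sequence in a real Hilbert space H and Ω ⊆ H nonempty. If (a) for every z ∈ Ω the sequence (‖z_k - z‖) converges, and (b) every weak sequential cluster point of (z_k) belongs to Ω, then (z_k) converges weakly to a point in Ω. -/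
open Filter Topology
open scoped RealInnerProductSpace

/-- A sequence converges weakly to `w` iff all inner products converge. -/
def WeakConv {H : Type*} [NormedAddCommGroup H] [InnerProductSpace ℝ H]
    (z : ℕ → H) (w : H) : Prop :=
  ∀ y : H, Tendsto (fun k => ⟪z k, y⟫) atTop (𝓝 ⟪w, y⟫)

/-- `w` is a weak sequential cluster point of `(z_k)`. -/
def WeakClusterPt {H : Type*} [NormedAddCommGroup H] [InnerProductSpace ℝ H]
    (z : ℕ → H) (w : H) : Prop :=
  ∃ φ : ℕ → ℕ, StrictMono φ ∧ WeakConv (z ∘ φ) w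

/-- Every bounded sequence in a real Hilbert space has a weak sequential
cluster point. -/
lemma exists_weakClusterPt_of_bounded
    {H : Type*} [NormedAddCommGroup H] [InnerProductSpace ℝ H] [CompleteSpace H]
    (z : ℕ → H) (C : ℝ) (hC : ∀ k, ‖z k‖ ≤ C) :
    ∃ w : H, WeakClusterPt z w := by
  have hC0 : 0 ≤ C := le_trans (norm_nonneg _) (hC 0)
  -- the sequence of inner products against each z j lives in a compact box
  set X := ∀ j : ℕ, Set.Icc (-(C * ‖z j‖)) (C * ‖z j‖) with hX
  have hbd : ∀ k j, ⟪z k, z j⟫ ∈ Set.Icc (-(C * ‖z j‖)) (C * ‖z j‖) := by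
    intro k j
    rw [Set.mem_Icc, ← abs_le]
    calc |⟪z k, z j⟫| ≤ ‖z k‖ * ‖z j‖ := abs_real_inner_le_norm _ _
      _ ≤ C * ‖z j‖ := by
        exact mul_le_mul_of_nonneg_right (hC k) (norm_nonneg _)
  set g : ℕ → X := fun k j => ⟨⟪z k, z j⟫, hbd k j⟩ with hg
  obtain ⟨L, -, φ, hφ, hLconv⟩ :=
    (isCompact_univ (X := X)).tendsto_subseq (x := g) (fun n => Set.mem_univ _)
  have hcoord : ∀ j : ℕ, Tendsto (fun k => ⟪z (φ k), z j⟫) atTop (𝓝 (L j : ℝ)) := by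
    intro j
    have h1 : Tendsto (fun k => (g ∘ φ) k j) atTop (𝓝 (L j)) :=
      (continuous_apply j).continuousAt.tendsto.comp hLconv
    exact (continuous_subtype_val.tendsto _).comp h1
  -- convergence on the span of the range
  have hspan : ∀ u ∈ Submodule.span ℝ (Set.range z),
      ∃ l : ℝ, Tendsto (fun k => ⟪z (φ k), u⟫) atTop (𝓝 l) := by
    intro u hu
    induction hu using Submodule.span_induction with
    | mem x hx =>
      obtain ⟨j, rfl⟩ := hx
      exact ⟨L j, hcoord j⟩
    | zero => exact ⟨0, by simpa using tendsto_const_nhds⟩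
    | add x y _ _ hx hy =>
      obtain ⟨lx, hlx⟩ := hx; obtain ⟨ly, hly⟩ := hy
      exact ⟨lx + ly, by simpa [inner_add_right] using hlx.add hly⟩
    | smul a x _ hx =>
      obtain ⟨lx, hlx⟩ := hx
      exact ⟨a * lx, by simpa [real_inner_smul_right] using hlx.const_mul a⟩
  -- convergence everywhere via orthogonal projection + density
  set M := (Submodule.span ℝ (Set.range z)).topologicalClosure with hM
  haveI : CompleteSpace M :=
    (Submodule.isClosed_topologicalClosure _).completeSpace_coe
  have hzM : ∀ k, z k ∈ M :=
    fun k => Submodule.le_topologicalClosure _ (Submodule.subset_span ⟨k, rfl⟩)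
  have hall : ∀ y : H, ∃ l : ℝ, Tendsto (fun k => ⟪z (φ k), y⟫) atTop (𝓝 l) := by
    intro y
    set p : H := (Submodule.orthogonalProjectionOnto M y : H) with hp
    have hperp : y - p ∈ Mᗮ := Submodule.sub_starProjection_mem_orthogonal (K := M) y
    have heq : ∀ k, ⟪z k, y⟫ = ⟪z k, p⟫ := by
      intro k
      have : ⟪z k, y - p⟫ = 0 :=
        Submodule.inner_right_of_mem_orthogonal (hzM k) hperp
      have := this
      rw [inner_sub_right] at this
      linarith
    -- p is in the closure of the span; show the sequence is Cauchy
    have hpM : p ∈ M := (Submodule.orthogonalProjectionOnto M y).2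
    have hcau : CauchySeq (fun k => ⟪z (φ k), p⟫) := by
      rw [Metric.cauchySeq_iff]
      intro ε hε
      have hpcl : p ∈ closure ((Submodule.span ℝ (Set.range z)) : Set H) := hpM
      obtain ⟨u, hu, hupc⟩ := Metric.mem_closure_iff.mp hpcl (ε / (3 * (C + 1)))
        (by positivity)
      obtain ⟨l, hl⟩ := hspan u hu
      have hlc : CauchySeq (fun k => ⟪z (φ k), u⟫) := hl.cauchySeq
      rw [Metric.cauchySeq_iff] at hlc
      obtain ⟨N, hN⟩ := hlc (ε / 3) (by positivity)
      refine ⟨N, fun m hm n hn => ?_⟩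
      have hbound : ∀ k, |⟪z (φ k), p - u⟫| ≤ C * ‖p - u‖ := by
        intro k
        calc |⟪z (φ k), p - u⟫| ≤ ‖z (φ k)‖ * ‖p - u‖ := abs_real_inner_le_norm _ _
          _ ≤ C * ‖p - u‖ := mul_le_mul_of_nonneg_right (hC _) (norm_nonneg _)
      have hpu : ‖p - u‖ < ε / (3 * (C + 1)) := by
        rw [Metric.mem_closure_iff] at hpcl
        simpa [dist_eq_norm] using hupc
      have h1 : |⟪z (φ m), p - u⟫| < ε / 3 := by
        have := hbound m
        have h2 : C * ‖p - u‖ < ε / 3 := by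
          calc C * ‖p - u‖ ≤ C * (ε / (3 * (C + 1))) :=
              mul_le_mul_of_nonneg_left hpu.le hC0
            _ < ε / 3 := by
              rw [← mul_div_assoc, div_lt_div_iff₀ (by positivity) (by norm_num)]
              nlinarith
        linarith
      have h1' : |⟪z (φ n), p - u⟫| < ε / 3 := by
        have := hbound n
        have h2 : C * ‖p - u‖ < ε / 3 := by
          calc C * ‖p - u‖ ≤ C * (ε / (3 * (C + 1))) :=
              mul_le_mul_of_nonneg_left hpu.le hC0
            _ < ε / 3 := by
              rw [← mul_div_assoc, div_lt_div_iff₀ (by positivity) (by norm_num)]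
              nlinarith
        linarith
      have hmid := hN m hm n hn
      rw [Real.dist_eq] at hmid ⊢
      have e1 : ⟪z (φ m), p⟫ = ⟪z (φ m), p - u⟫ + ⟪z (φ m), u⟫ := by
        rw [inner_sub_right]; ring
      have e2 : ⟪z (φ n), p⟫ = ⟪z (φ n), p - u⟫ + ⟪z (φ n), u⟫ := by
        rw [inner_sub_right]; ring
      rw [e1, e2]
      calc |⟪z (φ m), p - u⟫ + ⟪z (φ m), u⟫ - (⟪z (φ n), p - u⟫ + ⟪z (φ n), u⟫)|
          ≤ |⟪z (φ m), p - u⟫| + |⟪z (φ m), u⟫ - ⟪z (φ n), u⟫| + |⟪z (φ n), p - u⟫| := by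
            have := abs_add_le (⟪z (φ m), p - u⟫ - ⟪z (φ n), p - u⟫)
              (⟪z (φ m), u⟫ - ⟪z (φ n), u⟫)
            have h3 := abs_sub (⟪z (φ m), p - u⟫) (⟪z (φ n), p - u⟫)
            have h4 : ⟪z (φ m), p - u⟫ + ⟪z (φ m), u⟫ - (⟪z (φ n), p - u⟫ + ⟪z (φ n), u⟫)
              = (⟪z (φ m), p - u⟫ - ⟪z (φ n), p - u⟫) + (⟪z (φ m), u⟫ - ⟪z (φ n), u⟫) := by ring
            rw [h4]
            calc |(⟪z (φ m), p - u⟫ - ⟪z (φ n), p - u⟫) + (⟪z (φ m), u⟫ - ⟪z (φ n), u⟫)|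
                ≤ |⟪z (φ m), p - u⟫ - ⟪z (φ n), p - u⟫| + |⟪z (φ m), u⟫ - ⟪z (φ n), u⟫| :=
                  abs_add_le _ _
              _ ≤ |⟪z (φ m), p - u⟫| + |⟪z (φ n), p - u⟫| + |⟪z (φ m), u⟫ - ⟪z (φ n), u⟫| := by
                  have := abs_sub (⟪z (φ m), p - u⟫) (⟪z (φ n), p - u⟫)
                  linarith
              _ = |⟪z (φ m), p - u⟫| + |⟪z (φ m), u⟫ - ⟪z (φ n), u⟫| + |⟪z (φ n), p - u⟫| := by ring
        _ < ε / 3 + ε / 3 + ε / 3 := by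
            have := hmid
            exact add_lt_add (add_lt_add h1 hmid) h1'
        _ = ε := by ring
    obtain ⟨l, hl⟩ := cauchySeq_tendsto_of_complete hcau
    exact ⟨l, by simpa only [heq] using hl⟩
  -- build the limit functional and apply Riesz
  choose f hf using hall
  have hadd : ∀ a b : H, f (a + b) = f a + f b := by
    intro a b
    refine tendsto_nhds_unique (hf (a + b)) ?_
    simpa [inner_add_right] using (hf a).add (hf b)
  have hsmul : ∀ (c : ℝ) (a : H), f (c • a) = c * f a := by
    intro c a
    refine tendsto_nhds_unique (hf (c • a)) ?_
    simpa [real_inner_smul_right] using (hf a).const_mul c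
  have hbound : ∀ y : H, ‖f y‖ ≤ C * ‖y‖ := by
    intro y
    have h1 : Tendsto (fun k => |⟪z (φ k), y⟫|) atTop (𝓝 |f y|) := (hf y).abs
    have h2 : ∀ k, |⟪z (φ k), y⟫| ≤ C * ‖y‖ := fun k =>
      le_trans (abs_real_inner_le_norm _ _)
        (mul_le_mul_of_nonneg_right (hC _) (norm_nonneg _))
    exact le_of_tendsto h1 (Eventually.of_forall h2)
  set flin : H →L[ℝ] ℝ :=
    LinearMap.mkContinuous
      { toFun := f, map_add' := hadd, map_smul' := hsmul } C hbound with hflin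
  set w : H := (InnerProductSpace.toDual ℝ H).symm flin with hw
  have hwy : ∀ y : H, ⟪w, y⟫ = f y := by
    intro y
    have : (InnerProductSpace.toDual ℝ H) w = flin :=
      (InnerProductSpace.toDual ℝ H).apply_symm_apply flin
    have := congrFun (congrArg DFunLike.coe this) y
    rw [InnerProductSpace.toDual_apply_apply] at this
    exact this
  exact ⟨w, φ, hφ, fun y => by rw [hwy y]; exact hf y⟩

/-- Opial's lemma: if `‖z_k - z‖` converges for each `z ∈ Ω` and every weak
sequential cluster point of `(z_k)` lies in `Ω`, then `(z_k)` converges weakly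
to a point of `Ω`. -/
theorem opial_lemma
    {H : Type*} [NormedAddCommGroup H] [InnerProductSpace ℝ H] [CompleteSpace H]
    (z : ℕ → H) (Ω : Set H) (hΩ : Ω.Nonempty)
    (ha : ∀ w ∈ Ω, ∃ l : ℝ, Tendsto (fun k => ‖z k - w‖) atTop (𝓝 l))
    (hb : ∀ w : H, WeakClusterPt z w → w ∈ Ω) :
    ∃ w ∈ Ω, WeakConv z w := by
  obtain ⟨w0, hw0⟩ := hΩ
  obtain ⟨l0, hl0⟩ := ha w0 hw0
  obtain ⟨B, hB⟩ := hl0.bddAbove_range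
  set C : ℝ := B + ‖w0‖ with hCdef
  have hC : ∀ k, ‖z k‖ ≤ C := by
    intro k
    have h1 : ‖z k - w0‖ ≤ B := hB ⟨k, rfl⟩
    calc ‖z k‖ = ‖z k - w0 + w0‖ := by rw [sub_add_cancel]
      _ ≤ ‖z k - w0‖ + ‖w0‖ := norm_add_le _ _
      _ ≤ B + ‖w0‖ := by linarith
  obtain ⟨w, hwc⟩ := exists_weakClusterPt_of_bounded z C hC
  have hwΩ : w ∈ Ω := hb w hwc
  refine ⟨w, hwΩ, fun y => ?_⟩
  by_contra hcon
  rw [Metric.tendsto_atTop] at hcon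
  push_neg at hcon
  obtain ⟨ε, hε, hfreq⟩ := hcon
  have hfreq' : ∃ᶠ n in atTop, ε ≤ dist (⟪z n, y⟫) (⟪w, y⟫) := by
    rw [frequently_atTop]
    intro N
    obtain ⟨n, hn, h⟩ := hfreq N
    exact ⟨n, hn, h⟩
  obtain ⟨ψ, hψ, hψd⟩ := extraction_of_frequently_atTop hfreq'
  obtain ⟨w', χ, hχ, hconv'⟩ :=
    exists_weakClusterPt_of_bounded (z ∘ ψ) C (fun k => hC _)
  have hw'cl : WeakClusterPt z w' := ⟨ψ ∘ χ, hψ.comp hχ, hconv'⟩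
  have hw'Ω := hb w' hw'cl
  obtain ⟨l, hl⟩ := ha w hwΩ
  obtain ⟨l', hl'⟩ := ha w' hw'Ω
  set c : ℝ := (l ^ 2 - l' ^ 2 - ‖w‖ ^ 2 + ‖w'‖ ^ 2) / 2 with hcdef
  have key : ∀ k, ⟪z k, w' - w⟫
      = (‖z k - w‖ ^ 2 - ‖z k - w'‖ ^ 2 - ‖w‖ ^ 2 + ‖w'‖ ^ 2) / 2 := by
    intro k
    have h1 : ‖z k - w‖ ^ 2 = ‖z k‖ ^ 2 - 2 * ⟪z k, w⟫ + ‖w‖ ^ 2 :=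
      norm_sub_sq_real _ _
    have h2 : ‖z k - w'‖ ^ 2 = ‖z k‖ ^ 2 - 2 * ⟪z k, w'⟫ + ‖w'‖ ^ 2 :=
      norm_sub_sq_real _ _
    rw [inner_sub_right]
    rw [h1, h2]
    ring
  have hc : Tendsto (fun k => ⟪z k, w' - w⟫) atTop (𝓝 c) := by
    have h1 : Tendsto (fun k => (‖z k - w‖ ^ 2 - ‖z k - w'‖ ^ 2 - ‖w‖ ^ 2 + ‖w'‖ ^ 2) / 2)
        atTop (𝓝 c) := by
      exact ((((hl.pow 2).sub (hl'.pow 2)).sub tendsto_const_nhds).add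
        tendsto_const_nhds).div_const 2
    simpa only [← key] using h1
  obtain ⟨φ0, hφ0, hwconv⟩ := hwc
  have e1 : ⟪w, w' - w⟫ = c :=
    tendsto_nhds_unique (hwconv (w' - w)) (hc.comp hφ0.tendsto_atTop)
  have e2 : ⟪w', w' - w⟫ = c :=
    tendsto_nhds_unique (hconv' (w' - w)) (hc.comp (hψ.comp hχ).tendsto_atTop)
  have hww : w' = w := by
    have h0 : ⟪w' - w, w' - w⟫ = 0 := by
      rw [inner_sub_left]
      linarith
    have := inner_self_eq_zero.mp h0
    exact sub_eq_zero.mp this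
  have t3 : Tendsto (fun k => ⟪z (ψ (χ k)), y⟫) atTop (𝓝 ⟪w, y⟫) := by
    rw [← hww]
    exact hconv' y
  have t4 : Tendsto (fun k => dist (⟪z (ψ (χ k)), y⟫) (⟪w, y⟫)) atTop (𝓝 0) := by
    rw [← dist_self (⟪w, y⟫ : ℝ)]
    exact t3.dist tendsto_const_nhds
  have : ε ≤ 0 :=
    ge_of_tendsto t4 (Eventually.of_forall fun k => hψd (χ k))
  linarith
end

section
/- Let A, C : H ⇉ H be maximally monotone, B : H → H monotone, λ > 0. Suppose x, z ∈ H satisfy z - x ∈ λA(x) and x - z ∈ λ(B+C)(x), and the points x_j, y_j, z_j (j = k-1, k) satisfy z_j - x_j ∈ λA(x_j), 2x_j - z_j - y_j - λB(2y_{j-1} - y_{j-2}) ∈ λC(y_j), and z_{j+1} = z_j + y_j - x_j. Writing ȳ_j = 2y_j - y_{j-1} and z̄_k = 2z_k - z_{k-1}, then ‖z_{k+1} - z‖² + 2λ⟨B(ȳ_{k-1}) - B(x), y_k - y_{k-1}⟩ + 2‖z_{k+1} - z_k‖² + ‖z_{k+1} - z̄_k‖² ≤ ‖z_k - z‖² +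 2λ⟨B(ȳ_{k-2}) - B(x), y_{k-1} - y_{k-2}⟩ + ‖z_k - z_{k-1}‖² + 2λ⟨B(ȳ_{k-1}) - B(ȳ_{k-2}), ȳ_{k-1} - y_k⟩. -/
open scoped RealInnerProductSpace

/-- Key one-step estimate (Lemma 4.1) for the backward-reflected-forward-backward
method. Here `ȳ_j = 2y_j - y_{j-1}` and `z̄_k = 2z_k - z_{k-1}`. -/
theorem brfob_key_lemma
    {H : Type*} [NormedAddCommGroup H] [InnerProductSpace ℝ H] [CompleteSpace H]
    (A C : H → Set H) (hA : MaxMonotoneOp A) (hC : MaxMonotoneOp C)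
    (B : H → H) (hB : ∀ u v : H, 0 ≤ ⟪B u - B v, u - v⟫)
    (lam : ℝ) (hlam : 0 < lam)
    (x z xk xk1 yk yk1 yk2 yk3 zk zk1 zkp1 : H)
    -- z - x ∈ λA(x)
    (hzx : ∃ a ∈ A x, z - x = lam • a)
    -- x - z ∈ λ(B+C)(x), i.e. x - z - λB(x) ∈ λC(x)
    (hxz : ∃ c ∈ C x, x - z = lam • (B x + c))
    -- z_j - x_j ∈ λA(x_j) for j = k, k-1
    (hAk : ∃ a ∈ A xk, zk - xk = lam • a)
    (hAk1 : ∃ a ∈ A xk1, zk1 - xk1 = lam • a)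
    -- 2x_j - z_j - y_j - λB(2y_{j-1} - y_{j-2}) ∈ λC(y_j) for j = k, k-1
    (hCk : ∃ c ∈ C yk,
        (2 : ℝ) • xk - zk - yk - lam • B ((2 : ℝ) • yk1 - yk2) = lam • c)
    (hCk1 : ∃ c ∈ C yk1,
        (2 : ℝ) • xk1 - zk1 - yk1 - lam • B ((2 : ℝ) • yk2 - yk3) = lam • c)
    -- z_{j+1} = z_j + y_j - x_j for j = k, k-1
    (hz : zkp1 = zk + yk - xk) (hz1 : zk = zk1 + yk1 - xk1) :
    ‖zkp1 - z‖ ^ 2 +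
        2 * lam * ⟪B ((2 : ℝ) • yk1 - yk2) - B x, yk - yk1⟫ +
        2 * ‖zkp1 - zk‖ ^ 2 + ‖zkp1 - ((2 : ℝ) • zk - zk1)‖ ^ 2 ≤
      ‖zk - z‖ ^ 2 +
        2 * lam * ⟪B ((2 : ℝ) • yk2 - yk3) - B x, yk1 - yk2⟫ +
        ‖zk - zk1‖ ^ 2 +
        2 * lam * ⟪B ((2 : ℝ) • yk1 - yk2) - B ((2 : ℝ) • yk2 - yk3),
            ((2 : ℝ) • yk1 - yk2) - yk⟫ := by
  obtain ⟨a, ha, hae⟩ := hzx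
  obtain ⟨c, hc, hce⟩ := hxz
  obtain ⟨ak, hak, haek⟩ := hAk
  obtain ⟨ak1, hak1, haek1⟩ := hAk1
  obtain ⟨ck, hck, hcke⟩ := hCk
  obtain ⟨ck1, hck1, hcke1⟩ := hCk1
  subst hz
  subst hz1
  have h1 : 0 ≤ ⟪(z - x) - (zk1 + yk1 - xk1 - xk), x - xk⟫ := by
    rw [show zk1 + yk1 - xk1 - xk = lam • ak by linear_combination (norm := abel) haek,
      hae, ← smul_sub, real_inner_smul_left]
    exact mul_nonneg hlam.le (hA.1 ha hak)
  have h2 : 0 ≤ ⟪((x - z) - lam • B x) -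
      ((2 : ℝ) • xk - (zk1 + yk1 - xk1) - yk - lam • B ((2 : ℝ) • yk1 - yk2)),
      x - yk⟫ := by
    rw [show (x - z) - lam • B x = lam • c by
        rw [hce, smul_add]; abel,
      show (2 : ℝ) • xk - (zk1 + yk1 - xk1) - yk - lam • B ((2 : ℝ) • yk1 - yk2)
          = lam • ck from hcke,
      ← smul_sub, real_inner_smul_left]
    exact mul_nonneg hlam.le (hC.1 hc hck)
  have h3 : 0 ≤ ⟪((2 : ℝ) • xk1 - zk1 - yk1 - lam • B ((2 : ℝ) • yk2 - yk3)) -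
      ((2 : ℝ) • xk - (zk1 + yk1 - xk1) - yk - lam • B ((2 : ℝ) • yk1 - yk2)),
      yk1 - yk⟫ := by
    rw [hcke1, hcke, ← smul_sub, real_inner_smul_left]
    exact mul_nonneg hlam.le (hC.1 hck1 hck)
  have h4 : 0 ≤ ⟪(zk1 - xk1) - (zk1 + yk1 - xk1 - xk), xk1 - xk⟫ := by
    rw [haek1,
      show zk1 + yk1 - xk1 - xk = lam • ak by linear_combination (norm := abel) haek,
      ← smul_sub, real_inner_smul_left]
    exact mul_nonneg hlam.le (hA.1 hak1 hak)
  have h5 : 0 ≤ ⟪B ((2 : ℝ) • yk1 - yk2) - B x, ((2 : ℝ) • yk1 - yk2) - x⟫ :=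
    hB _ _
  have key : (‖zk1 + yk1 - xk1 - z‖ ^ 2 +
        2 * lam * ⟪B ((2 : ℝ) • yk2 - yk3) - B x, yk1 - yk2⟫ +
        ‖zk1 + yk1 - xk1 - zk1‖ ^ 2 +
        2 * lam * ⟪B ((2 : ℝ) • yk1 - yk2) - B ((2 : ℝ) • yk2 - yk3),
            ((2 : ℝ) • yk1 - yk2) - yk⟫) -
      (‖zk1 + yk1 - xk1 + yk - xk - z‖ ^ 2 +
        2 * lam * ⟪B ((2 : ℝ) • yk1 - yk2) - B x, yk - yk1⟫ +
        2 * ‖zk1 + yk1 - xk1 + yk - xk - (zk1 + yk1 - xk1)‖ ^ 2 +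
        ‖zk1 + yk1 - xk1 + yk - xk - ((2 : ℝ) • (zk1 + yk1 - xk1) - zk1)‖ ^ 2) =
      2 * ⟪(z - x) - (zk1 + yk1 - xk1 - xk), x - xk⟫ +
      2 * ⟪((x - z) - lam • B x) -
          ((2 : ℝ) • xk - (zk1 + yk1 - xk1) - yk - lam • B ((2 : ℝ) • yk1 - yk2)),
          x - yk⟫ +
      2 * ⟪((2 : ℝ) • xk1 - zk1 - yk1 - lam • B ((2 : ℝ) • yk2 - yk3)) -
          ((2 : ℝ) • xk - (zk1 + yk1 - xk1) - yk - lam • B ((2 : ℝ) • yk1 - yk2)),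
          yk1 - yk⟫ +
      2 * ⟪(zk1 - xk1) - (zk1 + yk1 - xk1 - xk), xk1 - xk⟫ +
      2 * lam * ⟪B ((2 : ℝ) • yk1 - yk2) - B x, ((2 : ℝ) • yk1 - yk2) - x⟫ := by
    simp only [← real_inner_self_eq_norm_sq, inner_sub_left, inner_sub_right,
      inner_add_left, inner_add_right, real_inner_smul_left, real_inner_smul_right,
      real_inner_comm]
    ring
  linarith [mul_nonneg hlam.le h5, key, h1, h2, h3, h4]
end
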